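/- Let f : [0,∞)^n → ℝ be locally Lipschitz with f(u) ≥ 0 whenever u_i = 0, and let v_i, u_i, ε satisfy 0 < c ≤ v_i ≤ C, 0 ≤ u_i, 0 < ε < 1/2, and ∑_ℓ u_ℓ ≤ L. Then there is a constant C' = C'(L, f, c, C) such that f(u)·(log((u_i+ε)/v_i) - (u_i+ε)/v_i + 1) ≤ C'·(|u_i - v_i|² + ε²). -/

import Mathlib

open Set Metric

/-- A locally Lipschitz function on a set is uniformly Lipschitz on any compact subset. -/
lemma locallyLipschitzOn_exists_lipschitz_const {α : Type*} [MetricSpace α]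
    {D S : Set α} {f : α → ℝ} (hf : LocallyLipschitzOn D f)
    (hS : IsCompact S) (hSD : S ⊆ D) :
    ∃ K : ℝ, 0 ≤ K ∧ ∀ x ∈ S, ∀ y ∈ S, dist (f x) (f y) ≤ K * dist x y := by
  choose K t ht hlip using fun x : S => hf (hSD x.2)
  choose U hUo hxU hUt using fun x : S => mem_nhdsWithin.1 (ht x)
  have hcover : S ⊆ ⋃ x : S, U x := fun y hy => mem_iUnion.2 ⟨⟨y, hy⟩, hxU _⟩
  obtain ⟨F, hF⟩ := hS.elim_finite_subcover U hUo hcover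
  have hcover' : S ⊆ ⋃ j : F, U j.1 := by
    intro z hz
    rcases mem_iUnion₂.1 (hF hz) with ⟨i, hi, h⟩
    exact mem_iUnion.2 ⟨⟨i, hi⟩, h⟩
  obtain ⟨δ, hδ, hball⟩ := lebesgue_number_lemma_of_metric hS (fun j : F => hUo j.1) hcover'
  obtain ⟨M, hM⟩ := hS.exists_bound_of_continuousOn ((hf.continuousOn).mono hSD)
  set K₀ : NNReal := F.sup K with hK₀
  refine ⟨(K₀ : ℝ) + 2 * max M 0 / δ + 1, by positivity, ?_⟩
  intro x hx y hy
  rcases lt_or_ge (dist x y) δ with h | h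
  · obtain ⟨j, hj⟩ := hball x hx
    have hxU' : x ∈ U j.1 := hj (mem_ball_self hδ)
    have hyU' : y ∈ U j.1 := hj (by rwa [mem_ball, dist_comm])
    have hxt : x ∈ t j.1 := hUt j.1 ⟨hxU', hSD hx⟩
    have hyt : y ∈ t j.1 := hUt j.1 ⟨hyU', hSD hy⟩
    have hd := (hlip j.1).dist_le_mul x hxt y hyt
    have hKj : (K j.1 : ℝ) ≤ (K₀ : ℝ) := by exact_mod_cast Finset.le_sup j.2
    have h0 : (0:ℝ) ≤ dist x y := dist_nonneg
    have h2 : (0:ℝ) ≤ 2 * max M 0 / δ := by positivity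
    nlinarith
  · have hb : dist (f x) (f y) ≤ 2 * max M 0 := by
      have h1 := hM x hx
      have h2 := hM y hy
      have h3 : M ≤ max M 0 := le_max_left _ _
      calc dist (f x) (f y) ≤ ‖f x‖ + ‖f y‖ := dist_le_norm_add_norm _ _
        _ ≤ 2 * max M 0 := by linarith
    have h0 : (0:ℝ) ≤ dist x y := dist_nonneg
    have hK0 : (0:ℝ) ≤ (K₀ : ℝ) := K₀.coe_nonneg
    have hmax : (0:ℝ) ≤ max M 0 := le_max_right _ _
    have : 2 * max M 0 = (2 * max M 0 / δ) * δ := by field_simp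
    nlinarith [mul_le_mul_of_nonneg_left h (by positivity : (0:ℝ) ≤ 2 * max M 0 / δ)]

theorem reaction_relative_entropy_bound (n : ℕ) (hn : 1 ≤ n)
    (f : (Fin n → ℝ) → ℝ)
    (hf : LocallyLipschitzOn {u : Fin n → ℝ | ∀ k, 0 ≤ u k} f)
    (i : Fin n)
    (hqp : ∀ u : Fin n → ℝ, (∀ k, 0 ≤ u k) → u i = 0 → 0 ≤ f u)
    (c C L : ℝ) (hc : 0 < c) (hcC : c ≤ C) (hL : 0 < L) :
    ∃ C' : ℝ, 0 < C' ∧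
      ∀ (u : Fin n → ℝ) (v ε : ℝ), (∀ k, 0 ≤ u k) → ∑ k, u k ≤ L →
        c ≤ v → v ≤ C → 0 < ε → ε < 1 / 2 →
        f u * (Real.log ((u i + ε) / v) - (u i + ε) / v + 1) ≤
          C' * (|u i - v| ^ 2 + ε ^ 2) := by
  set D : Set (Fin n → ℝ) := {u : Fin n → ℝ | ∀ k, 0 ≤ u k} with hD
  set S : Set (Fin n → ℝ) := {u : Fin n → ℝ | (∀ k, 0 ≤ u k) ∧ ∑ k, u k ≤ L} with hSdef
  have hSD : S ⊆ D := fun u hu => hu.1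
  have hSclosed : IsClosed S := by
    have h1 : IsClosed {u : Fin n → ℝ | ∀ k, 0 ≤ u k} := by
      have : {u : Fin n → ℝ | ∀ k, 0 ≤ u k} = ⋂ k, {u : Fin n → ℝ | 0 ≤ u k} := by
        ext u; simp [Set.mem_iInter]
      rw [this]
      exact isClosed_iInter fun k => isClosed_le continuous_const (continuous_apply k)
    have h2 : IsClosed {u : Fin n → ℝ | ∑ k, u k ≤ L} :=
      isClosed_le (by continuity) continuous_const
    have : S = {u : Fin n → ℝ | ∀ k, 0 ≤ u k} ∩ {u : Fin n → ℝ | ∑ k, u k ≤ L} := by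
      ext u; simp [hSdef, Set.mem_setOf_eq, Set.mem_inter_iff]
    rw [this]; exact h1.inter h2
  have hScompact : IsCompact S := by
    refine (isCompact_closedBall (0 : Fin n → ℝ) L).of_isClosed_subset hSclosed ?_
    intro u hu
    rw [mem_closedBall, dist_zero_right]
    rw [pi_norm_le_iff_of_nonneg hL.le]
    intro k
    rw [Real.norm_eq_abs, abs_of_nonneg (hu.1 k)]
    calc u k ≤ ∑ l, u l := Finset.single_le_sum (fun l _ => hu.1 l) (Finset.mem_univ k)
      _ ≤ L := hu.2
  obtain ⟨K, hK0, hK⟩ := locallyLipschitzOn_exists_lipschitz_const hf hScompact hSD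
  refine ⟨2 * K / c + 1, by positivity, ?_⟩
  intro u v ε hu hsum hcv hvC hε hε2
  have hv : 0 < v := lt_of_lt_of_le hc hcv
  set a : ℝ := u i with ha
  have ha0 : 0 ≤ a := hu i
  set w : ℝ := a + ε with hw
  have hw0 : 0 < w := by positivity
  have hwv : 0 < w / v := div_pos hw0 hv
  -- φ := log (w/v) - w/v + 1 ≤ 0
  have hub : Real.log (w / v) ≤ w / v - 1 := Real.log_le_sub_one_of_pos hwv
  have hRHS0 : 0 ≤ (2 * K / c + 1) * (|a - v| ^ 2 + ε ^ 2) := by positivity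
  rcases le_or_gt 0 (f u) with hfu | hfu
  · have : f u * (Real.log (w / v) - w / v + 1) ≤ 0 :=
      mul_nonpos_of_nonneg_of_nonpos hfu (by linarith)
    linarith
  · -- f u < 0 : use Lipschitz bound -f u ≤ K * a
    set u' : Fin n → ℝ := Function.update u i 0 with hu'
    have hu'0 : ∀ k, 0 ≤ u' k := by
      intro k
      rcases eq_or_ne k i with rfl | hk
      · simp [hu']
      · simp [hu', Function.update_of_ne hk]; exact hu k
    have hu'S : u' ∈ S := by
      refine ⟨hu'0, le_trans (Finset.sum_le_sum fun k _ => ?_) hsum⟩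
      rcases eq_or_ne k i with rfl | hk
      · simp [hu']; exact hu k
      · simp [hu', Function.update_of_ne hk]
    have huS : u ∈ S := ⟨hu, hsum⟩
    have hfu' : 0 ≤ f u' := hqp u' hu'0 (by simp [hu'])
    have hdist : dist u u' ≤ a := by
      rw [dist_pi_le_iff ha0]
      intro k
      rcases eq_or_ne k i with rfl | hk
      · simp [hu', Real.dist_eq, abs_of_nonneg ha0]
        rw [abs_of_nonneg (hu _)]
      · simp only [hu', Function.update_of_ne hk, dist_self]
        exact ha0
    have hKf : -f u ≤ K * a := by
      have h1 : f u' - f u ≤ dist (f u') (f u) := le_abs_self _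
      have h2 : dist (f u') (f u) ≤ K * dist u' u := hK u' hu'S u huS
      rw [dist_comm u' u] at h2
      have h4 : K * dist u u' ≤ K * a := mul_le_mul_of_nonneg_left hdist hK0
      linarith
    have hKa0 : 0 ≤ K * a := mul_nonneg hK0 ha0
    clear_value a w
    -- lower bound on φ : -(φ) ≤ (w-v)^2/(v*w)
    set φ : ℝ := Real.log (w / v) - w / v + 1 with hφ
    clear_value φ
    have hlog2 : Real.log (v / w) ≤ v / w - 1 := Real.log_le_sub_one_of_pos (div_pos hv hw0)
    have hlogflip : Real.log (w / v) = - Real.log (v / w) := by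
      rw [← Real.log_inv, inv_div]
    have hφlb : -φ ≤ (w - v) ^ 2 / (v * w) := by
      have heq : w / v - 1 - (1 - v / w) = (w - v) ^ 2 / (v * w) := by
        field_simp
      rw [hφ, hlogflip]
      linarith
    have hφ0 : 0 ≤ -φ := by rw [hφ]; linarith
    have s1 : (-f u) * (-φ) ≤ (K * a) * (-φ) :=
      mul_le_mul_of_nonneg_right hKf hφ0
    have s2 : (K * a) * (-φ) ≤ (K * a) * ((w - v) ^ 2 / (v * w)) :=
      mul_le_mul_of_nonneg_left hφlb hKa0
    have step1 : f u * φ ≤ (K * a) * ((w - v) ^ 2 / (v * w)) := by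
      have e1 : f u * φ = (-f u) * (-φ) := by ring
      linarith [e1 ▸ le_trans s1 s2]
    have hfrac : a / (v * w) ≤ 1 / c := by
      rw [div_le_div_iff₀ (by positivity) hc]
      nlinarith
    have step2 : (K * a) * ((w - v) ^ 2 / (v * w)) ≤ K * (1 / c) * (w - v) ^ 2 := by
      have e2 : (K * a) * ((w - v) ^ 2 / (v * w)) = (a / (v * w)) * (K * (w - v) ^ 2) := by
        ring
      have e3 : K * (1 / c) * (w - v) ^ 2 = (1 / c) * (K * (w - v) ^ 2) := by ring
      rw [e2, e3]
      exact mul_le_mul_of_nonneg_right hfrac (by positivity)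
    have hsq : (w - v) ^ 2 ≤ 2 * ((a - v) ^ 2 + ε ^ 2) := by
      have e : 2 * ((a - v) ^ 2 + ε ^ 2) - (w - v) ^ 2 = (a - v - ε) ^ 2 := by
        rw [hw]; ring
      linarith [sq_nonneg (a - v - ε)]
    have step3 : K * (1 / c) * (w - v) ^ 2 ≤ (2 * K / c + 1) * (|a - v| ^ 2 + ε ^ 2) := by
      rw [sq_abs]
      have hKc : 0 ≤ K * (1 / c) := by positivity
      have h1 := mul_le_mul_of_nonneg_left hsq hKc
      have hX : (0:ℝ) ≤ (a - v) ^ 2 + ε ^ 2 := by positivity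
      have h2 : (2 * K / c) * ((a - v) ^ 2 + ε ^ 2) ≤
          (2 * K / c + 1) * ((a - v) ^ 2 + ε ^ 2) :=
        mul_le_mul_of_nonneg_right (by linarith) hX
      have e : K * (1 / c) * (2 * ((a - v) ^ 2 + ε ^ 2)) =
          (2 * K / c) * ((a - v) ^ 2 + ε ^ 2) := by ring
      linarith
    linarith
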